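/- Let (V_m)_{m≥1} be a sequence of positive real numbers that is subadditive, i.e. V_{m+n} ≤ V_m + V_n for all m, n ≥ 1. Then ∑_{r≥1} V_{4^r}²/4^r ≤ 64 · ∑_{n≥1} V_n²/n². -/

import Mathlib

open MeasureTheory ProbabilityTheory Filter
open scoped ENNReal NNReal Topology

noncomputable section

/-- The σ-algebra generated by the random variables `ξ k`, `k ∈ I`. -/
def sigmaOf {Ω S : Type*} [MeasurableSpace S] (ξ : ℤ → Ω → S) (I : Set ℤ) :
    MeasurableSpace Ω :=
  ⨆ k ∈ I, MeasurableSpace.comap (ξ k) inferInstance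

/-- The σ-algebra generated by the pair `(ξ i, ξ j)`. -/
def pairSigma {Ω S : Type*} [MeasurableSpace S] (ξ : ℤ → Ω → S) (i j : ℤ) :
    MeasurableSpace Ω :=
  MeasurableSpace.comap (ξ i) inferInstance ⊔ MeasurableSpace.comap (ξ j) inferInstance

/-- Conditional independence of the σ-algebras `m₁` and `m₂` given `m'`. -/
def CondIndepGiven {Ω : Type*} [MeasurableSpace Ω] (μ : Measure Ω)
    (m' m₁ m₂ : MeasurableSpace Ω) : Prop :=
  ∀ A B : Set Ω, MeasurableSet[m₁] A → MeasurableSet[m₂] B →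
    μ[(A ∩ B).indicator (fun _ => (1 : ℝ)) | m'] =ᵐ[μ]
      fun ω => (μ[A.indicator (fun _ => (1 : ℝ)) | m']) ω *
        (μ[B.indicator (fun _ => (1 : ℝ)) | m']) ω

/-- Markov property: for every `n`, the past `σ(ξ k, k ≤ n)` and the future
`σ(ξ k, k ≥ n)` are conditionally independent given `σ(ξ n)`. -/
def IsMarkovChain {Ω S : Type*} [MeasurableSpace Ω] [MeasurableSpace S]
    (μ : Measure Ω) (ξ : ℤ → Ω → S) : Prop :=
  ∀ n : ℤ, CondIndepGiven μ (MeasurableSpace.comap (ξ n) inferInstance)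
    (sigmaOf ξ {k | k ≤ n}) (sigmaOf ξ {k | n ≤ k})

/-- Stationarity: `(ξ (n+1))_n` has the same law as `(ξ n)_n`. -/
def IsStationaryZ {Ω S : Type*} [MeasurableSpace Ω] [MeasurableSpace S]
    (μ : Measure Ω) (ξ : ℤ → Ω → S) : Prop :=
  Measure.map (fun ω (n : ℤ) => ξ (n + 1) ω) μ = Measure.map (fun ω (n : ℤ) => ξ n ω) μ

/-- The left shift on path space `S^ℤ`. -/
def shiftZ {S : Type*} (x : ℤ → S) : ℤ → S := fun n => x (n + 1)

/-- Total ergodicity: every iterate of the shift is ergodic for the law of the chain. -/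
def TotallyErgodic {Ω S : Type*} [MeasurableSpace Ω] [MeasurableSpace S]
    (μ : Measure Ω) (ξ : ℤ → Ω → S) : Prop :=
  ∀ k : ℕ, 0 < k → Ergodic (shiftZ^[k]) (Measure.map (fun ω (n : ℤ) => ξ n ω) μ)

/-- Partial sums `S_n = f(ξ 1) + ⋯ + f(ξ n)`. -/
def pS {Ω S : Type*} (ξ : ℤ → Ω → S) (f : S → ℝ) (n : ℕ) (ω : Ω) : ℝ :=
  ∑ i ∈ Finset.Icc 1 n, f (ξ (i : ℤ) ω)

/-- Convergence in distribution (weak convergence of the laws) of real random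
variables to the measure `ν`. -/
def TendstoInDistribution {Ω : Type*} [MeasurableSpace Ω] (μ : Measure Ω)
    (Y : ℕ → Ω → ℝ) (ν : Measure ℝ) : Prop :=
  ∀ g : BoundedContinuousFunction ℝ ℝ,
    Tendsto (fun n => ∫ ω, g (Y n ω) ∂μ) atTop (𝓝 (∫ x, g x ∂ν))

noncomputable def cc (r : ℕ) : ℝ≥0∞ :=
  ENNReal.ofReal (4 / ((4:ℝ)^(r+1) * ((4:ℝ)^(r+1) - 1)))

lemma key (V : ℕ → ℝ) (hpos : ∀ m, 1 ≤ m → 0 < V m)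
    (hsub : ∀ m n, 1 ≤ m → 1 ≤ n → V (m + n) ≤ V m + V n) (N : ℕ) (hN : 2 ≤ N) :
    ((N : ℝ) - 1) * V N ^ 2 ≤ 4 * ∑ n ∈ Finset.range (N - 1), V (n + 1) ^ 2 := by
  set m := N - 1 with hm
  have hNm : N = m + 1 := (Nat.succ_pred_eq_of_pos (by omega)).symm
  have step : ∀ n ∈ Finset.range m, V N ^ 2 ≤ 2 * V (n+1) ^ 2 + 2 * V (N - (n+1)) ^ 2 := by
    intro n hn
    rw [Finset.mem_range] at hn
    have h1 : 1 ≤ n + 1 := by omega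
    have h2 : 1 ≤ N - (n+1) := by omega
    have h3 : (n+1) + (N - (n+1)) = N := by omega
    have hV : V N ≤ V (n+1) + V (N - (n+1)) := by
      have := hsub (n+1) (N - (n+1)) h1 h2
      rwa [h3] at this
    have hVpos : 0 < V N := hpos N (by omega)
    calc V N ^ 2 ≤ (V (n+1) + V (N - (n+1))) ^ 2 := by
          apply pow_le_pow_left₀ hVpos.le hV
      _ ≤ 2 * V (n+1) ^ 2 + 2 * V (N - (n+1)) ^ 2 := by nlinarith [sq_nonneg (V (n+1) - V (N - (n+1)))]
  have hsum := Finset.sum_le_sum step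
  rw [Finset.sum_const, Finset.card_range, nsmul_eq_mul] at hsum
  have hrefl : ∑ n ∈ Finset.range m, V (N - (n+1)) ^ 2 = ∑ n ∈ Finset.range m, V (n+1) ^ 2 := by
    have := Finset.sum_range_reflect (fun i => V (i + 1) ^ 2) m
    rw [← this]
    apply Finset.sum_congr rfl
    intro n hn
    rw [Finset.mem_range] at hn
    congr 2
    omega
  rw [Finset.sum_add_distrib, ← Finset.mul_sum, ← Finset.mul_sum, hrefl] at hsum
  have : ((m : ℝ)) = (N : ℝ) - 1 := by rw [hNm]; push_cast; ring
  rw [← this]; linarith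

lemma claimA (V : ℕ → ℝ) (hpos : ∀ m, 1 ≤ m → 0 < V m)
    (hsub : ∀ m n, 1 ≤ m → 1 ≤ n → V (m + n) ≤ V m + V n) (r : ℕ) :
    ENNReal.ofReal (V (4 ^ (r + 1)) ^ 2) / (4 : ℝ≥0∞) ^ (r + 1) ≤
      ∑' n : ℕ, ENNReal.ofReal (V (n + 1) ^ 2) *
        (if n + 2 ≤ 4 ^ (r + 1) then cc r else 0) := by
  set N : ℕ := 4 ^ (r + 1) with hNdef
  have hN : 2 ≤ N := by
    have : 4 ^ 1 ≤ 4 ^ (r + 1) := Nat.pow_le_pow_right (by norm_num) (by omega)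
    omega
  have htsum : (∑' n : ℕ, ENNReal.ofReal (V (n + 1) ^ 2) *
        (if n + 2 ≤ N then cc r else 0)) =
      ∑ n ∈ Finset.range (N - 1), ENNReal.ofReal (V (n + 1) ^ 2) * cc r := by
    rw [tsum_eq_sum (s := Finset.range (N - 1))]
    · apply Finset.sum_congr rfl
      intro n hn
      rw [Finset.mem_range] at hn
      rw [if_pos (by omega)]
    · intro n hn
      rw [Finset.mem_range] at hn
      rw [if_neg (by omega), mul_zero]
  rw [htsum, ← Finset.sum_mul]
  set S : ℝ := ∑ n ∈ Finset.range (N - 1), V (n + 1) ^ 2 with hS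
  have hSnonneg : 0 ≤ S := Finset.sum_nonneg fun n _ => sq_nonneg _
  have hsum_eq : (∑ n ∈ Finset.range (N - 1), ENNReal.ofReal (V (n + 1) ^ 2)) =
      ENNReal.ofReal S := by
    rw [hS, ENNReal.ofReal_sum_of_nonneg]
    intro n _; exact sq_nonneg _
  rw [hsum_eq]
  have hx : (4:ℝ)^(r+1) = (N : ℝ) := by rw [hNdef]; push_cast; ring
  have hxpos : (2:ℝ) ≤ (N:ℝ) := by exact_mod_cast hN
  -- rewrite LHS
  have hL : (ENNReal.ofReal (V N ^ 2) / (4 : ℝ≥0∞) ^ (r + 1)) =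
      ENNReal.ofReal (V N ^ 2 / (N : ℝ)) := by
    rw [ENNReal.ofReal_div_of_pos (by linarith)]
    congr 1
    rw [← hx]
    rw [← ENNReal.ofReal_ofNat 4, ← ENNReal.ofReal_pow (by norm_num)]
  rw [hL, cc, ← ENNReal.ofReal_mul hSnonneg]
  apply ENNReal.ofReal_le_ofReal
  have hk := key V hpos hsub N hN
  rw [← hS] at hk
  have h1 : V N ^ 2 ≤ 4 * S / ((N:ℝ) - 1) := by
    rw [le_div_iff₀ (by linarith)]
    linarith
  have h2 : V N ^ 2 / (N:ℝ) ≤ (4 * S / ((N:ℝ) - 1)) / (N:ℝ) := by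
    gcongr
  refine h2.trans_eq ?_
  rw [hx]
  field_simp

lemma cc_le (r : ℕ) : cc r ≤ 8 / (16:ℝ≥0∞)^(r+1) := by
  have hx : (4:ℝ) ≤ (4:ℝ)^(r+1) := by
    calc (4:ℝ) = 4^1 := by norm_num
    _ ≤ 4^(r+1) := by apply pow_le_pow_right₀ (by norm_num); omega
  have hreal : 4 / ((4:ℝ)^(r+1) * ((4:ℝ)^(r+1) - 1)) ≤ 8 / ((4:ℝ)^(r+1))^2 := by
    rw [div_le_div_iff₀ (by nlinarith) (by positivity)]
    nlinarith
  have h16 : ((4:ℝ)^(r+1))^2 = (16:ℝ)^(r+1) := by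
    rw [← pow_mul, mul_comm, pow_mul]; norm_num
  calc cc r ≤ ENNReal.ofReal (8 / ((4:ℝ)^(r+1))^2) := ENNReal.ofReal_le_ofReal hreal
    _ = 8 / (16:ℝ≥0∞)^(r+1) := by
        rw [h16, ENNReal.ofReal_div_of_pos (by positivity)]
        norm_num

lemma claimB (n : ℕ) :
    (∑' r : ℕ, (if n + 2 ≤ 4 ^ (r + 1) then cc r else 0)) ≤
      64 / ((n : ℝ≥0∞) + 1) ^ 2 := by
  have hex : ∃ r, n + 2 ≤ 4 ^ (r + 1) := by
    refine ⟨n + 2, ?_⟩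
    have h4 : n + 2 + 1 < 4 ^ (n + 2 + 1) := Nat.lt_pow_self (by norm_num)
    omega
  obtain ⟨k₀, hspec, hmin⟩ : ∃ k, n + 2 ≤ 4 ^ (k + 1) ∧ ∀ r < k, ¬ (n + 2 ≤ 4 ^ (r + 1)) :=
    ⟨Nat.find hex, Nat.find_spec hex, fun r hr => Nat.find_min hex hr⟩
  have hbound : ∀ r, (if n + 2 ≤ 4 ^ (r + 1) then cc r else 0) ≤
      (if n + 2 ≤ 4 ^ (r + 1) then (8:ℝ≥0∞) / 16^(r+1) else 0) := by
    intro r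
    split
    · exact cc_le r
    · exact le_refl _
  refine le_trans (ENNReal.tsum_le_tsum hbound) ?_
  set h : ℕ → ℝ≥0∞ := fun r => if n + 2 ≤ 4 ^ (r + 1) then (8:ℝ≥0∞) / 16^(r+1) else 0 with hh
  have hsplit : (∑' r, h r) = ∑' r, h (r + k₀) := by
    refine (Function.Injective.tsum_eq (g := fun j => j + k₀) (add_left_injective k₀) ?_).symm
    intro r hr
    rcases le_or_gt k₀ r with hle | hlt
    · exact ⟨r - k₀, by simp; omega⟩
    · exfalso
      apply hr
      simp only [hh]
      rw [if_neg (hmin r hlt)]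
  have htail : ∀ r : ℕ, h (r + k₀) ≤ (8 / (16:ℝ≥0∞)^(k₀+1)) * (16⁻¹ : ℝ≥0∞)^r := by
    intro r
    have heq : (8:ℝ≥0∞) / 16^(r + k₀ + 1) = (8 / (16:ℝ≥0∞)^(k₀+1)) * (16⁻¹ : ℝ≥0∞)^r := by
      rw [show r + k₀ + 1 = (k₀ + 1) + r by omega, pow_add, div_eq_mul_inv,
        ENNReal.mul_inv (by simp) (by simp), ← mul_assoc, ← div_eq_mul_inv,
        ← ENNReal.inv_pow]
      simp [div_eq_mul_inv]
    rw [← heq]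
    simp only [hh]
    split
    · exact le_refl _
    · exact zero_le
  have hgeom : (∑' r : ℕ, (8 / (16:ℝ≥0∞)^(k₀+1)) * (16⁻¹ : ℝ≥0∞)^r) ≤
      (8 / (16:ℝ≥0∞)^(k₀+1)) * 2 := by
    rw [ENNReal.tsum_mul_left]
    gcongr
    calc (∑' r : ℕ, (16⁻¹ : ℝ≥0∞)^r) ≤ ∑' r : ℕ, (2⁻¹ : ℝ≥0∞)^r := by
          apply ENNReal.tsum_le_tsum
          intro r
          gcongr
          norm_num
      _ = (1 - 2⁻¹)⁻¹ := ENNReal.tsum_geometric _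
      _ = 2 := by rw [ENNReal.one_sub_inv_two]; simp
  have hfinal : (8 / (16:ℝ≥0∞)^(k₀+1)) * 2 ≤ 64 / ((n : ℝ≥0∞) + 1) ^ 2 := by
    have hmul : (8 / (16:ℝ≥0∞)^(k₀+1)) * 2 = 16 / (16:ℝ≥0∞)^(k₀+1) := by
      rw [div_eq_mul_inv, div_eq_mul_inv, mul_right_comm]
      norm_num
    rw [hmul]
    have hcast : ((n : ℝ≥0∞) + 1) ≤ (4:ℝ≥0∞)^(k₀+1) := by
      have hn1 : n + 1 ≤ 4 ^ (k₀ + 1) := le_trans (by omega) hspec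
      have h2 : ((n+1 : ℕ) : ℝ≥0∞) ≤ ((4^(k₀+1) : ℕ) : ℝ≥0∞) := Nat.cast_le.mpr hn1
      push_cast at h2
      exact_mod_cast h2
    have hsq : ((n : ℝ≥0∞) + 1)^2 ≤ (16:ℝ≥0∞)^(k₀+1) := by
      calc ((n : ℝ≥0∞) + 1)^2 ≤ ((4:ℝ≥0∞)^(k₀+1))^2 := by gcongr
        _ = (16:ℝ≥0∞)^(k₀+1) := by rw [← pow_mul, mul_comm, pow_mul]; norm_num
    gcongr
    norm_num
  calc (∑' r, h r) = ∑' r, h (r + k₀) := hsplit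
    _ ≤ ∑' r : ℕ, (8 / (16:ℝ≥0∞)^(k₀+1)) * (16⁻¹ : ℝ≥0∞)^r := ENNReal.tsum_le_tsum htail
    _ ≤ (8 / (16:ℝ≥0∞)^(k₀+1)) * 2 := hgeom
    _ ≤ 64 / ((n : ℝ≥0∞) + 1) ^ 2 := hfinal

theorem stmt9 (V : ℕ → ℝ) (hpos : ∀ m, 1 ≤ m → 0 < V m)
    (hsub : ∀ m n, 1 ≤ m → 1 ≤ n → V (m + n) ≤ V m + V n) :
    ∑' r : ℕ, ENNReal.ofReal (V (4 ^ (r + 1)) ^ 2) / (4 : ℝ≥0∞) ^ (r + 1) ≤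
      64 * ∑' n : ℕ, ENNReal.ofReal (V (n + 1) ^ 2) / ((n : ℝ≥0∞) + 1) ^ 2 := by
  calc ∑' r : ℕ, ENNReal.ofReal (V (4 ^ (r + 1)) ^ 2) / (4 : ℝ≥0∞) ^ (r + 1)
      ≤ ∑' r : ℕ, ∑' n : ℕ, ENNReal.ofReal (V (n + 1) ^ 2) *
          (if n + 2 ≤ 4 ^ (r + 1) then cc r else 0) :=
        ENNReal.tsum_le_tsum (claimA V hpos hsub)
    _ = ∑' n : ℕ, ∑' r : ℕ, ENNReal.ofReal (V (n + 1) ^ 2) *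
          (if n + 2 ≤ 4 ^ (r + 1) then cc r else 0) := ENNReal.tsum_comm
    _ ≤ ∑' n : ℕ, ENNReal.ofReal (V (n + 1) ^ 2) * (64 / ((n : ℝ≥0∞) + 1) ^ 2) := by
        apply ENNReal.tsum_le_tsum
        intro n
        rw [ENNReal.tsum_mul_left]
        exact mul_le_mul_right (claimB n) _
    _ = ∑' n : ℕ, 64 * (ENNReal.ofReal (V (n + 1) ^ 2) / ((n : ℝ≥0∞) + 1) ^ 2) := by
        apply tsum_congr
        intro n
        rw [div_eq_mul_inv, div_eq_mul_inv, ← mul_assoc, ← mul_assoc, mul_comm _ (64 : ℝ≥0∞)]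
    _ = 64 * ∑' n : ℕ, ENNReal.ofReal (V (n + 1) ^ 2) / ((n : ℝ≥0∞) + 1) ^ 2 :=
        ENNReal.tsum_mul_left

end
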